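/- Every homothetic preorder on a cone X in a real vector space admits a homothetic extension to a total preorder: i.e., if ≿ is a preorder on X such that for all λ > 0, x ≿ y iff λx ≿ λy and x ≻ y iff λx ≻ λy, then there exists a complete, transitive relation ≽ extending ≿ (with the strict part of ≿ contained in the strict part of ≽) that is also homothetic. -/

import Mathlib

section AuxHomothetic

variable {V : Type*} [AddCommGroup V] [Module ℝ V]

/-- A "good" relation (as a set of pairs): supported on `X ×ˢ X`, reflexive on `X`,
transitive, extends `r`, avoids reversals of strict `r`-pairs, and invariant under
positive scaling. -/
def HomoGood (X : Set V) (r : V → V → Prop) (s : Set (V × V)) : Prop :=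
  (∀ p ∈ s, p.1 ∈ X ∧ p.2 ∈ X) ∧
  (∀ x ∈ X, (x, x) ∈ s) ∧
  (∀ x y z : V, (x, y) ∈ s → (y, z) ∈ s → (x, z) ∈ s) ∧
  (∀ x ∈ X, ∀ y ∈ X, r x y → (x, y) ∈ s) ∧
  (∀ x ∈ X, ∀ y ∈ X, r x y → ¬ r y x → (y, x) ∉ s) ∧
  (∀ x y : V, ∀ l : ℝ, 0 < l → (x, y) ∈ s → (l • x, l • y) ∈ s)

lemma flatten_replicate_prod (k : ℕ) (L : List ℝ) :
    ((List.replicate k L).flatten).prod = L.prod ^ k := by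
  induction k with
  | zero => simp
  | succ n ih => simp [List.replicate_succ, ih, pow_succ]; ring

lemma flatten_replicate_length (k : ℕ) (L : List ℝ) :
    ((List.replicate k L).flatten).length = k * L.length := by
  induction k with
  | zero => simp
  | succ n ih => simp [List.replicate_succ, ih]; ring

/-- Chaining equal numbers of `b → μ•a` steps and `a → ν•b` steps. -/
lemma pairs_chain (P : Set (V × V)) (a b : V)
    (htr : ∀ x y z : V, (x, y) ∈ P → (y, z) ∈ P → (x, z) ∈ P)
    (hinv : ∀ x y : V, ∀ l : ℝ, 0 < l → (x, y) ∈ P → (l • x, l • y) ∈ P)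
    (hbb : (b, b) ∈ P) :
    ∀ p q : List ℝ, (∀ μ ∈ p, 0 < μ ∧ (b, μ • a) ∈ P) →
      (∀ ν ∈ q, 0 < ν ∧ (a, ν • b) ∈ P) → p.length = q.length →
      (b, (p.prod * q.prod) • b) ∈ P := by
  intro p
  induction p with
  | nil =>
    intro q _ _ hlen
    have hq : q = [] := List.length_eq_zero_iff.mp hlen.symm
    subst hq
    simpa using hbb
  | cons μ p ih =>
    intro q hp hq hlen
    cases q with
    | nil => simp at hlen
    | cons ν q =>
      obtain ⟨hμpos, hμ⟩ := hp μ List.mem_cons_self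
      obtain ⟨hνpos, hν⟩ := hq ν List.mem_cons_self
      have h2 : (μ • a, (μ * ν) • b) ∈ P := by
        have := hinv a (ν • b) μ hμpos hν
        rwa [smul_smul] at this
      have h3 : (b, (μ * ν) • b) ∈ P := htr _ _ _ hμ h2
      have h4 : (b, (p.prod * q.prod) • b) ∈ P := by
        refine ih q (fun x hx => hp x (List.mem_cons_of_mem _ hx))
          (fun x hx => hq x (List.mem_cons_of_mem _ hx)) ?_
        simpa using hlen
      have h5 : ((μ * ν) • b, ((μ * ν) * (p.prod * q.prod)) • b) ∈ P := by
        have := hinv b ((p.prod * q.prod) • b) (μ * ν) (mul_pos hμpos hνpos) h4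
        rwa [smul_smul] at this
      have h6 := htr _ _ _ h3 h5
      have harith : (μ * ν) * (p.prod * q.prod) = (μ :: p).prod * ((ν :: q)).prod := by
        simp [List.prod_cons]; ring
      rwa [harith] at h6

/-- If `P` is good and maximal, and `(a,b) ∉ P`, then adding the scaled pairs
`(l•a, l•b)` must break the strict-preservation condition, producing certificate data. -/
lemma aux_fail (X : Set V) (hcone : ∀ x ∈ X, ∀ l : ℝ, 0 < l → l • x ∈ X)
    (r : V → V → Prop) (P : Set (V × V)) (hgood : HomoGood X r P)
    (hmax : ∀ s, HomoGood X r s → P ⊆ s → s = P)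
    (a b : V) (ha : a ∈ X) (hb : b ∈ X) (hab : (a, b) ∉ P) :
    ∃ u v : V, ∃ l₁ l₂ : ℝ, ∃ L : List ℝ, u ∈ X ∧ v ∈ X ∧ r u v ∧ ¬ r v u ∧
      0 < l₁ ∧ 0 < l₂ ∧ (∀ μ ∈ L, 0 < μ ∧ (b, μ • a) ∈ P) ∧
      l₂ = l₁ * L.prod ∧ (v, l₁ • a) ∈ P ∧ (l₂ • b, u) ∈ P := by
  obtain ⟨hsupp, hrfl, htr, hext, hstrict, hinv⟩ := hgood
  set S : V → V → Prop := fun x y => (x, y) ∈ P ∨ ∃ l : ℝ, 0 < l ∧ x = l • a ∧ y = l • b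
    with hS
  set Q : Set (V × V) := {p | Relation.TransGen S p.1 p.2} with hQ
  have hPQ : P ⊆ Q := fun p hp => Relation.TransGen.single (Or.inl hp)
  have habQ : (a, b) ∈ Q := by
    refine Relation.TransGen.single (Or.inr ⟨1, one_pos, ?_, ?_⟩) <;> simp
  -- S respects membership and scaling
  have hSsupp : ∀ x y : V, S x y → x ∈ X ∧ y ∈ X := by
    intro x y h
    rcases h with h | ⟨l, hl, rfl, rfl⟩
    · exact hsupp _ h
    · exact ⟨hcone a ha l hl, hcone b hb l hl⟩
  have hSinv : ∀ x y : V, ∀ l : ℝ, 0 < l → S x y → S (l • x) (l • y) := by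
    intro x y l hl h
    rcases h with h | ⟨t, ht, rfl, rfl⟩
    · exact Or.inl (hinv _ _ l hl h)
    · exact Or.inr ⟨l * t, mul_pos hl ht, by rw [smul_smul], by rw [smul_smul]⟩
  -- Q satisfies all goodness conditions except possibly strict preservation
  have hQsupp : ∀ p ∈ Q, p.1 ∈ X ∧ p.2 ∈ X := by
    rintro ⟨x, y⟩ hp
    simp only [hQ, Set.mem_setOf_eq] at hp
    induction hp with
    | single h => exact hSsupp _ _ h
    | tail _ h ih => exact ⟨ih.1, (hSsupp _ _ h).2⟩
  have hQrfl : ∀ x ∈ X, (x, x) ∈ Q := fun x hx =>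
    Relation.TransGen.single (Or.inl (hrfl x hx))
  have hQtr : ∀ x y z : V, (x, y) ∈ Q → (y, z) ∈ Q → (x, z) ∈ Q := by
    intro x y z h1 h2
    exact Relation.TransGen.trans h1 h2
  have hQext : ∀ x ∈ X, ∀ y ∈ X, r x y → (x, y) ∈ Q := fun x hx y hy h =>
    hPQ (hext x hx y hy h)
  have hQinv : ∀ x y : V, ∀ l : ℝ, 0 < l → (x, y) ∈ Q → (l • x, l • y) ∈ Q := by
    intro x y l hl h
    simp only [hQ, Set.mem_setOf_eq] at h ⊢
    induction h with
    | single h => exact Relation.TransGen.single (hSinv _ _ l hl h)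
    | tail _ h ih => exact Relation.TransGen.tail ih (hSinv _ _ l hl h)
  -- strict preservation must fail for Q
  have hfail : ∃ u v : V, u ∈ X ∧ v ∈ X ∧ r u v ∧ ¬ r v u ∧ (v, u) ∈ Q := by
    by_contra hcontra
    push_neg at hcontra
    have : HomoGood X r Q :=
      ⟨hQsupp, hQrfl, hQtr, hQext,
        fun x hx y hy h1 h2 h3 => hcontra x y hx hy h1 h2 h3, hQinv⟩
    have := hmax Q this hPQ
    rw [this] at habQ
    exact hab habQ
  obtain ⟨u, v, hu, hv, hruv, hnrvu, hvuQ⟩ := hfail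
  -- scaling both ways
  have hPiff : ∀ (x y : V) (t : ℝ), 0 < t → ((t • x, t • y) ∈ P ↔ (x, y) ∈ P) := by
    intro x y t ht
    constructor
    · intro h
      have := hinv _ _ t⁻¹ (inv_pos.mpr ht) h
      simpa [smul_smul, inv_mul_cancel₀ (ne_of_gt ht)] using this
    · exact hinv x y t ht
  -- extract normal form from the TransGen chain
  have extract : ∀ x y : V, Relation.TransGen S x y →
      ((x, y) ∈ P ∨ ∃ l₁ l₂ : ℝ, ∃ L : List ℝ, 0 < l₁ ∧ 0 < l₂ ∧
        (∀ μ ∈ L, 0 < μ ∧ (b, μ • a) ∈ P) ∧ l₂ = l₁ * L.prod ∧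
        (x, l₁ • a) ∈ P ∧ (l₂ • b, y) ∈ P) := by
    intro x y h
    induction h with
    | single h =>
      rcases h with h | ⟨l, hl, rfl, rfl⟩
      · exact Or.inl h
      · refine Or.inr ⟨l, l, [], hl, hl, by simp, by simp, ?_, ?_⟩
        · exact hrfl _ (hcone a ha l hl)
        · exact hrfl _ (hcone b hb l hl)
    | @tail y' z hxy hyz ih =>
      rcases hyz with h | ⟨l, hl, rfl, rfl⟩
      · rcases ih with h' | ⟨l₁, l₂, L, hl₁, hl₂, hL, hprod, h1, h2⟩
        · exact Or.inl (htr _ _ _ h' h)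
        · exact Or.inr ⟨l₁, l₂, L, hl₁, hl₂, hL, hprod, h1, htr _ _ _ h2 h⟩
      · rcases ih with h' | ⟨l₁, l₂, L, hl₁, hl₂, hL, hprod, h1, h2⟩
        · refine Or.inr ⟨l, l, [], hl, hl, by simp, by simp, h', ?_⟩
          exact hrfl _ (hcone b hb l hl)
        · -- (l₂ • b, l • a) ∈ P, so l/l₂ is a valid step
          have hstep : (b, (l / l₂) • a) ∈ P := by
            have h3 : (l₂ • b, l₂ • ((l / l₂) • a)) ∈ P := by
              have : l₂ • ((l / l₂) • a) = l • a := by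
                rw [smul_smul]; congr 1; field_simp
              rw [this]; exact h2
            exact (hPiff _ _ l₂ hl₂).mp h3
          refine Or.inr ⟨l₁, l, L ++ [l / l₂], hl₁, hl, ?_, ?_, h1, ?_⟩
          · intro μ hμ
            rcases List.mem_append.mp hμ with hμ | hμ
            · exact hL μ hμ
            · simp only [List.mem_singleton] at hμ
              subst hμ
              exact ⟨div_pos hl hl₂, hstep⟩
          · rw [List.prod_append, List.prod_singleton, ← mul_assoc, ← hprod]
            field_simp
          · exact hrfl _ (hcone b hb l hl)
  rcases extract v u hvuQ with h | ⟨l₁, l₂, L, hl₁, hl₂, hL, hprod, h1, h2⟩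
  · exact absurd h (hstrict u hu v hv hruv hnrvu)
  · exact ⟨u, v, l₁, l₂, L, hu, hv, hruv, hnrvu, hl₁, hl₂, hL, hprod, h1, h2⟩

end AuxHomothetic

/-- Every homothetic preorder on a cone X in a real vector space admits a
homothetic extension to a complete transitive relation on X. -/
theorem stmt_3 {V : Type*} [AddCommGroup V] [Module ℝ V] (X : Set V)
    (hcone : ∀ x ∈ X, ∀ l : ℝ, 0 < l → l • x ∈ X)
    (r : V → V → Prop)
    (hrefl : ∀ x ∈ X, r x x)
    (htrans : ∀ x ∈ X, ∀ y ∈ X, ∀ z ∈ X, r x y → r y z → r x z)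
    (hhom : ∀ x ∈ X, ∀ y ∈ X, ∀ l : ℝ, 0 < l →
      (r x y ↔ r (l • x) (l • y)) ∧
      ((r x y ∧ ¬ r y x) ↔ (r (l • x) (l • y) ∧ ¬ r (l • y) (l • x)))) :
    ∃ R : V → V → Prop,
      (∀ x ∈ X, ∀ y ∈ X, R x y ∨ R y x) ∧
      (∀ x ∈ X, ∀ y ∈ X, ∀ z ∈ X, R x y → R y z → R x z) ∧
      (∀ x ∈ X, ∀ y ∈ X, r x y → R x y) ∧
      (∀ x ∈ X, ∀ y ∈ X, r x y → ¬ r y x → R x y ∧ ¬ R y x) ∧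
      (∀ x ∈ X, ∀ y ∈ X, ∀ l : ℝ, 0 < l →
        (R x y → R (l • x) (l • y)) ∧
        (R x y ∧ ¬ R y x → R (l • x) (l • y) ∧ ¬ R (l • y) (l • x))) := by
  classical
  -- the base relation
  set r₀ : Set (V × V) := {p | p.1 ∈ X ∧ p.2 ∈ X ∧ r p.1 p.2} with hr₀def
  have hr₀ : HomoGood X r r₀ := by
    refine ⟨fun p hp => ⟨hp.1, hp.2.1⟩, fun x hx => ⟨hx, hx, hrefl x hx⟩, ?_, ?_, ?_, ?_⟩
    · rintro x y z ⟨hx, hy, hxy⟩ ⟨_, hz, hyz⟩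
      exact ⟨hx, hz, htrans x hx y hy z hz hxy hyz⟩
    · exact fun x hx y hy h => ⟨hx, hy, h⟩
    · rintro x hx y hy h1 h2 ⟨_, _, h3⟩
      exact h2 h3
    · rintro x y l hl ⟨hx, hy, hxy⟩
      exact ⟨hcone x hx l hl, hcone y hy l hl,
        ((hhom x hx y hy l hl).1).mp hxy⟩
  -- Zorn's lemma
  obtain ⟨P, hr₀P, hPmax⟩ := zorn_subset_nonempty {s : Set (V × V) | HomoGood X r s}
    (by
      intro c hc hchain ⟨s₀, hs₀⟩
      refine ⟨⋃₀ c, ?_, fun s hs => Set.subset_sUnion_of_mem hs⟩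
      have hmem : ∀ s ∈ c, HomoGood X r s := fun s hs => hc hs
      refine ⟨?_, ?_, ?_, ?_, ?_, ?_⟩
      · rintro p ⟨s, hs, hp⟩
        exact (hmem s hs).1 p hp
      · intro x hx
        exact ⟨s₀, hs₀, (hmem s₀ hs₀).2.1 x hx⟩
      · rintro x y z ⟨s₁, hs₁, h1⟩ ⟨s₂, hs₂, h2⟩
        rcases eq_or_ne s₁ s₂ with rfl | hne
        · exact ⟨s₁, hs₁, (hmem s₁ hs₁).2.2.1 x y z h1 h2⟩
        · rcases hchain hs₁ hs₂ hne with hsub | hsub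
          · exact ⟨s₂, hs₂, (hmem s₂ hs₂).2.2.1 x y z (hsub h1) h2⟩
          · exact ⟨s₁, hs₁, (hmem s₁ hs₁).2.2.1 x y z h1 (hsub h2)⟩
      · intro x hx y hy h
        exact ⟨s₀, hs₀, (hmem s₀ hs₀).2.2.2.1 x hx y hy h⟩
      · rintro x hx y hy h1 h2 ⟨s, hs, h3⟩
        exact (hmem s hs).2.2.2.2.1 x hx y hy h1 h2 h3
      · rintro x y l hl ⟨s, hs, h⟩
        exact ⟨s, hs, (hmem s hs).2.2.2.2.2 x y l hl h⟩)
    r₀ hr₀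
  obtain ⟨hPgood, hPmax'⟩ := hPmax
  have hmax : ∀ s, HomoGood X r s → P ⊆ s → s = P := by
    intro s hsgood hsub
    exact Set.Subset.antisymm (hPmax' hsgood hsub) hsub
  obtain ⟨hsupp, hrfl', htr, hext, hstrict, hinv⟩ := hPgood
  have hgood : HomoGood X r P := ⟨hsupp, hrfl', htr, hext, hstrict, hinv⟩
  have hPiff : ∀ (x y : V) (t : ℝ), 0 < t → ((t • x, t • y) ∈ P ↔ (x, y) ∈ P) := by
    intro x y t ht
    constructor
    · intro h
      have := hinv _ _ t⁻¹ (inv_pos.mpr ht) h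
      simpa [smul_smul, inv_mul_cancel₀ (ne_of_gt ht)] using this
    · exact hinv x y t ht
  -- totality of the maximal element
  have htotal : ∀ x ∈ X, ∀ y ∈ X, (x, y) ∈ P ∨ (y, x) ∈ P := by
    intro a ha b hb
    by_contra hcon
    push_neg at hcon
    obtain ⟨hab, hba⟩ := hcon
    obtain ⟨u, v, l₁, l₂, L, hu, hv, hruv, hnrvu, hl₁, hl₂, hL, hprod, h1, h2⟩ :=
      aux_fail X hcone r P hgood hmax a b ha hb hab
    obtain ⟨u', v', k₁, k₂, K, hu', hv', hruv', hnrvu', hk₁, hk₂, hK, hprod', h1', h2'⟩ :=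
      aux_fail X hcone r P hgood hmax b a hb ha hba
    -- positivity of products
    have hLpos : ∀ μ ∈ L, (0:ℝ) < μ := fun μ hμ => (hL μ hμ).1
    have hKpos : ∀ ν ∈ K, (0:ℝ) < ν := fun ν hν => (hK ν hν).1
    have hp : (0:ℝ) < L.prod := List.prod_pos hLpos
    have hq : (0:ℝ) < K.prod := List.prod_pos hKpos
    -- closing step for the first cycle : (b, (l₁/l₂) • a) ∈ P
    have hclose1 : (b, (l₁ / l₂) • a) ∈ P := by
      have huv : (u, v) ∈ P := hext u hu v hv hruv
      have hbig : (l₂ • b, l₁ • a) ∈ P := htr _ _ _ (htr _ _ _ h2 huv) h1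
      have : (l₂ • b, l₂ • ((l₁ / l₂) • a)) ∈ P := by
        have heq : l₂ • ((l₁ / l₂) • a) = l₁ • a := by
          rw [smul_smul]; congr 1; field_simp
        rw [heq]; exact hbig
      exact (hPiff _ _ l₂ hl₂).mp this
    have hclose2 : (a, (k₁ / k₂) • b) ∈ P := by
      have huv : (u', v') ∈ P := hext u' hu' v' hv' hruv'
      have hbig : (k₂ • a, k₁ • b) ∈ P := htr _ _ _ (htr _ _ _ h2' huv) h1'
      have : (k₂ • a, k₂ • ((k₁ / k₂) • b)) ∈ P := by
        have heq : k₂ • ((k₁ / k₂) • b) = k₁ • b := by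
          rw [smul_smul]; congr 1; field_simp
        rw [heq]; exact hbig
      exact (hPiff _ _ k₂ hk₂).mp this
    -- padded lists
    set Lfull : List ℝ := L ++ [l₁ / l₂] with hLfull
    set Kfull : List ℝ := K ++ [k₁ / k₂] with hKfull
    have hLfullprod : Lfull.prod = 1 := by
      rw [hLfull, List.prod_append, List.prod_singleton, hprod]
      field_simp
    have hKfullprod : Kfull.prod = 1 := by
      rw [hKfull, List.prod_append, List.prod_singleton, hprod']
      field_simp
    set plist : List ℝ := L ++ (List.replicate K.length Lfull).flatten with hplist
    set qlist : List ℝ := K ++ (List.replicate L.length Kfull).flatten with hqlist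
    have hplistmem : ∀ μ ∈ plist, 0 < μ ∧ (b, μ • a) ∈ P := by
      intro μ hμ
      rcases List.mem_append.mp hμ with hμ | hμ
      · exact hL μ hμ
      · obtain ⟨l, hl, hμl⟩ := List.mem_flatten.mp hμ
        have : l = Lfull := (List.mem_replicate.mp hl).2
        subst this
        rcases List.mem_append.mp hμl with hμ' | hμ'
        · exact hL μ hμ'
        · simp only [List.mem_singleton] at hμ'
          subst hμ'
          exact ⟨div_pos hl₁ hl₂, hclose1⟩
    have hqlistmem : ∀ ν ∈ qlist, 0 < ν ∧ (a, ν • b) ∈ P := by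
      intro ν hν
      rcases List.mem_append.mp hν with hν | hν
      · exact hK ν hν
      · obtain ⟨l, hl, hνl⟩ := List.mem_flatten.mp hν
        have : l = Kfull := (List.mem_replicate.mp hl).2
        subst this
        rcases List.mem_append.mp hνl with hν' | hν'
        · exact hK ν hν'
        · simp only [List.mem_singleton] at hν'
          subst hν'
          exact ⟨div_pos hk₁ hk₂, hclose2⟩
    have hlen : plist.length = qlist.length := by
      rw [hplist, hqlist]
      simp only [List.length_append, flatten_replicate_length, hLfull, hKfull,
        List.length_append, List.length_singleton]
      ring
    have hplistprod : plist.prod = L.prod := by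
      rw [hplist, List.prod_append, flatten_replicate_prod, hLfullprod, one_pow, mul_one]
    have hqlistprod : qlist.prod = K.prod := by
      rw [hqlist, List.prod_append, flatten_replicate_prod, hKfullprod, one_pow, mul_one]
    -- the long chain
    have hchainbb : (b, (L.prod * K.prod) • b) ∈ P := by
      have := pairs_chain P a b htr hinv (hrfl' b hb) plist qlist hplistmem hqlistmem hlen
      rwa [hplistprod, hqlistprod] at this
    -- final contradiction : (v, u) ∈ P
    have hstep2 : (l₁ • a, (l₁ * (k₁ / k₂)) • b) ∈ P := by
      have := hinv _ _ l₁ hl₁ hclose2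
      rwa [smul_smul] at this
    have hstep3 : ((l₁ * (k₁ / k₂)) • b, l₂ • b) ∈ P := by
      have hpos : (0:ℝ) < l₁ * (k₁ / k₂) := mul_pos hl₁ (div_pos hk₁ hk₂)
      have := hinv _ _ (l₁ * (k₁ / k₂)) hpos hchainbb
      rw [smul_smul] at this
      have heq : l₁ * (k₁ / k₂) * (L.prod * K.prod) = l₂ := by
        rw [hprod, hprod']
        field_simp
      rwa [heq] at this
    have hvu : (v, u) ∈ P := htr _ _ _ h1 (htr _ _ _ hstep2 (htr _ _ _ hstep3 h2))
    exact hstrict u hu v hv hruv hnrvu hvu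
  -- conclude
  refine ⟨fun x y => (x, y) ∈ P, htotal, ?_, ?_, ?_, ?_⟩
  · exact fun x _ y _ z _ h1 h2 => htr x y z h1 h2
  · exact fun x hx y hy h => hext x hx y hy h
  · exact fun x hx y hy h1 h2 => ⟨hext x hx y hy h1, hstrict x hx y hy h1 h2⟩
  · intro x hx y hy l hl
    refine ⟨fun h => hinv x y l hl h, fun ⟨h1, h2⟩ => ⟨hinv x y l hl h1, ?_⟩⟩
    intro h3
    exact h2 ((hPiff y x l hl).mp h3)
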